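/- If m⁺, m⁻ ∈ ℝ² satisfy m₂⁺ = (m₁⁺)²/2 and m₂⁻ = (m₁⁻)²/2, m⁺ ≠ m⁻, and n = (m⁺ − m⁻)/|m⁺ − m⁻|, then (Σ(m⁺) − Σ(m⁻))·n = |m₁⁺ − m₁⁻|³ / (12√(1 + (1/4)(m₁⁺ + m₁⁻)²)). -/

import Mathlib

/-- Second expression for the jump cost (Lemma jumpexp, second form):
(Σ(m⁺) − Σ(m⁻))·n = |m₁⁺ − m₁⁻|³/(12√(1 + (1/4)(m₁⁺ + m₁⁻)²)). -/
theorem stmt_4 (mp1 mp2 mm1 mm2 p1 p2 n1 n2 : ℝ)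
    (hparp : mp2 = mp1 ^ 2 / 2) (hparm : mm2 = mm1 ^ 2 / 2)
    (hne : (mp1, mp2) ≠ (mm1, mm2))
    (hp1 : p1 = mp1 - mm1) (hp2 : p2 = mp2 - mm2)
    (hn1 : n1 = p1 / Real.sqrt (p1 ^ 2 + p2 ^ 2))
    (hn2 : n2 = p2 / Real.sqrt (p1 ^ 2 + p2 ^ 2)) :
    ((mp1 * mp2 - mp1 ^ 3 / 6) - (mm1 * mm2 - mm1 ^ 3 / 6)) * n1
      + ((-(mp1 ^ 2) / 2) - (-(mm1 ^ 2) / 2)) * n2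
      = |mp1 - mm1| ^ 3 / (12 * Real.sqrt (1 + (1 / 4) * (mp1 + mm1) ^ 2)) := by
  have hd : mp1 - mm1 ≠ 0 := by
    intro h
    apply hne
    have h1 : mp1 = mm1 := by linarith
    subst h1
    rw [hparp, hparm]
  have hsq : p1 ^ 2 + p2 ^ 2 = (mp1 - mm1) ^ 2 * (1 + (1 / 4) * (mp1 + mm1) ^ 2) := by
    subst hp1 hp2 hparp hparm; ring
  have hS : Real.sqrt (p1 ^ 2 + p2 ^ 2)
      = |mp1 - mm1| * Real.sqrt (1 + (1 / 4) * (mp1 + mm1) ^ 2) := by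
    rw [hsq, Real.sqrt_mul (sq_nonneg _), Real.sqrt_sq_eq_abs]
  set q := Real.sqrt (1 + (1 / 4) * (mp1 + mm1) ^ 2) with hq
  have hqpos : 0 < q := Real.sqrt_pos.mpr (by positivity)
  set A := |mp1 - mm1| with hA
  have habs : A ≠ 0 := abs_ne_zero.mpr hd
  have habs2 : A ^ 2 = (mp1 - mm1) ^ 2 := sq_abs _
  rw [hn1, hn2, hS, hp1, hp2, hparp, hparm]
  have hcomb :
      ((mp1 * (mp1 ^ 2 / 2) - mp1 ^ 3 / 6) - (mm1 * (mm1 ^ 2 / 2) - mm1 ^ 3 / 6))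
          * ((mp1 - mm1) / (A * q))
        + ((-(mp1 ^ 2) / 2) - (-(mm1 ^ 2) / 2)) * ((mp1 ^ 2 / 2 - mm1 ^ 2 / 2) / (A * q))
      = ((mp1 - mm1) ^ 4 / 12) / (A * q) := by
    field_simp
    ring
  rw [hcomb]
  have h4 : (mp1 - mm1) ^ 4 = A ^ 4 := by
    rw [show A ^ 4 = (A ^ 2) ^ 2 by ring, habs2]; ring
  rw [h4]
  field_simp
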